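/- Let t = 7 and 2k ∈ {2, 4, 6}. Let V^(2k) be the kernel in F_2^7 / X (X spanned by the all-ones vector) of the linear map T_{2k} sending the class of (u_1,...,u_7) to u_1 + ... + u_{2k} (sum in F_2). Define S on V^(2k) as min(weight, 7 − weight) of a representative. Then V^(2k) contains no 4-dimensional F_2-subspace U with U ∩ {S = 1} = ∅ and U ∩ {S = 2} = ∅. -/

import Mathlib

/-- The `t`-dimensional vector space over `𝔽₂`. -/
abbrev F2 (t : ℕ) := Fin t → ZMod 2

/-- Hamming weight: the number of nonzero coordinates. -/
def wt {t : ℕ} (e : F2 t) : ℕ := (Finset.univ.filter fun i => e i = 1).card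

/-- The subspace `X = {0, (1,…,1)}` spanned by the all-ones vector. -/
def allOnes (t : ℕ) : Submodule (ZMod 2) (F2 t) :=
  Submodule.span (ZMod 2) {(fun _ => 1 : F2 t)}

/-- The quotient space `V = 𝔽₂^t / X`. -/
abbrev V (t : ℕ) := F2 t ⧸ allOnes t

namespace Stmt4Aux

open Finset

def supp (e : F2 7) : Finset (Fin 7) := Finset.univ.filter fun i => e i = 1

lemma wt_eq_card (e : F2 7) : wt e = (supp e).card := rfl

lemma mem_supp {e : F2 7} {i : Fin 7} : i ∈ supp e ↔ e i = 1 := by simp [supp]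

lemma zmod2 (a : ZMod 2) : a = 0 ∨ a = 1 := by revert a; decide

def ones : F2 7 := fun _ => 1

lemma supp_add (a b : F2 7) : supp (a + b) = symmDiff (supp a) (supp b) := by
  ext i
  simp only [mem_supp, Finset.mem_symmDiff, Pi.add_apply]
  rcases zmod2 (a i) with h | h <;> rcases zmod2 (b i) with h' | h' <;> simp [h, h']

lemma wt_le (e : F2 7) : wt e ≤ 7 := by
  have := Finset.card_filter_le (Finset.univ : Finset (Fin 7)) (fun i => e i = 1)
  simpa [wt] using this

lemma wt_zero_iff (e : F2 7) : wt e = 0 ↔ e = 0 := by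
  constructor
  · intro h
    funext i
    have : i ∉ supp e := by
      intro hi
      have : supp e ≠ ∅ := Finset.ne_empty_of_mem hi
      exact this (Finset.card_eq_zero.mp h)
    rcases zmod2 (e i) with h' | h'
    · exact h'
    · exact absurd (mem_supp.mpr h') this
  · intro h; subst h; simp [wt]

lemma wt_seven_iff (e : F2 7) : wt e = 7 ↔ e = ones := by
  constructor
  · intro h
    have hs : supp e = Finset.univ := Finset.eq_univ_of_card _ (by simpa [wt_eq_card] using h)
    funext i
    have : i ∈ supp e := hs ▸ Finset.mem_univ i
    exact mem_supp.mp this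
  · intro h; subst h; decide

lemma mem_allOnes {e : F2 7} : e ∈ allOnes 7 ↔ e = 0 ∨ e = ones := by
  rw [allOnes, Submodule.mem_span_singleton]
  constructor
  · rintro ⟨c, rfl⟩
    rcases zmod2 c with h | h <;> subst h
    · left; simp
    · right; funext i; simp [ones]
  · rintro (rfl | rfl)
    · exact ⟨0, by simp⟩
    · exact ⟨1, by funext i; simp [ones]⟩

lemma supp_add_ones (e : F2 7) : supp (e + ones) = Finset.univ \ supp e := by
  ext i
  simp only [mem_supp, Finset.mem_sdiff, Finset.mem_univ, true_and, Pi.add_apply, ones]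
  rcases zmod2 (e i) with h | h <;> simp [h]

lemma wt_add_ones (e : F2 7) : wt (e + ones) = 7 - wt e := by
  rw [wt_eq_card, supp_add_ones, Finset.card_sdiff_of_subset (Finset.subset_univ _)]
  simp [wt_eq_card]

/-- Every nonzero class with `S ≠ 1, 2` has a weight-3 representative. -/
lemma exists_rep (S : V 7 → ℕ)
    (hS : ∀ e : F2 7, S (Submodule.Quotient.mk e) = min (wt e) (7 - wt e))
    (u : V 7) (hu : u ≠ 0) (h1 : S u ≠ 1) (h2 : S u ≠ 2) :
    ∃ e : F2 7, Submodule.Quotient.mk e = u ∧ wt e = 3 := by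
  obtain ⟨e, rfl⟩ := Submodule.Quotient.mk_surjective (allOnes 7) u
  have hle := wt_le e
  have hSe := hS e
  have hne0 : wt e ≠ 0 := by
    intro h
    exact hu (by rw [(wt_zero_iff e).mp h]; simp)
  have hne7 : wt e ≠ 7 := by
    intro h
    apply hu
    rw [(wt_seven_iff e).mp h]
    exact (Submodule.Quotient.mk_eq_zero _).mpr (mem_allOnes.mpr (Or.inr rfl))
  have h34 : wt e = 3 ∨ wt e = 4 := by omega
  rcases h34 with h | h
  · exact ⟨e, rfl, h⟩
  · refine ⟨e + ones, ?_, by rw [wt_add_ones, h]⟩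
    have : Submodule.Quotient.mk (p := allOnes 7) ones = 0 :=
      (Submodule.Quotient.mk_eq_zero _).mpr (mem_allOnes.mpr (Or.inr rfl))
    rw [Submodule.Quotient.mk_add, this, add_zero]

end Stmt4Aux

open Stmt4Aux Finset in
theorem stmt_4 (k : ℕ) (hk : 1 ≤ k) (hk' : k ≤ 3)
    (S : V 7 → ℕ)
    (hS : ∀ e : F2 7, S (Submodule.Quotient.mk e) = min (wt e) (7 - wt e))
    (T : V 7 → ZMod 2)
    (hT : ∀ e : F2 7,
      T (Submodule.Quotient.mk e) = ∑ i : Fin 7, if (i : ℕ) < 2 * k then e i else 0) :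
    ¬ ∃ U : Submodule (ZMod 2) (V 7), Module.finrank (ZMod 2) U = 4 ∧
        (∀ u ∈ U, T u = 0) ∧ (∀ u ∈ U, S u ≠ 1) ∧ (∀ u ∈ U, S u ≠ 2) := by
  rintro ⟨U, hU4, -, h1, h2⟩
  haveI : Fact (Nat.Prime 2) := ⟨by norm_num⟩
  -- basis of U indexed by Fin 4
  let b : Module.Basis (Fin 4) (ZMod 2) U := Module.finBasisOfFinrankEq (ZMod 2) U hU4
  let ψ : F2 4 →ₗ[ZMod 2] U := b.equivFun.symm
  have hψinj : Function.Injective ψ := b.equivFun.symm.injective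
  -- each nonzero x : F2 4 yields a weight-3 representative of ↑(ψ x)
  have hrep : ∀ x : F2 4, x ≠ 0 → ∃ e : F2 7,
      Submodule.Quotient.mk e = (ψ x : V 7) ∧ wt e = 3 := by
    intro x hx
    have hne : (ψ x : V 7) ≠ 0 := by
      intro h
      exact hx (hψinj (by rw [map_zero]; exact Subtype.ext h))
    exact exists_rep S hS _ hne (h1 _ (ψ x).2) (h2 _ (ψ x).2)
  choose! e he hwt using hrep
  -- the key pairwise intersection property
  have hpair : ∀ x y : F2 4, x ≠ 0 → y ≠ 0 → x ≠ y →
      (supp (e x) ∩ supp (e y)).card = 1 := by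
    intro x y hx hy hxy
    have hxyne : x + y ≠ 0 := by
      intro h
      apply hxy
      have hyy : y + y = 0 := by
        funext i; rcases zmod2 (y i) with h' | h' <;> rw [Pi.add_apply, h', Pi.zero_apply] <;> rfl
      have : x = x + (y + y) := by rw [hyy, add_zero]
      rw [this, ← add_assoc, h, zero_add]
    -- the sum e x + e y represents ↑(ψ (x+y)) which is nonzero with S ∉ {1,2}
    have hmk : Submodule.Quotient.mk (e x + e y) = (ψ (x + y) : V 7) := by
      rw [Submodule.Quotient.mk_add, he x hx, he y hy, map_add]
      rfl
    have hne : (ψ (x + y) : V 7) ≠ 0 := by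
      intro h
      exact hxyne (hψinj (by rw [map_zero]; exact Subtype.ext h))
    have hwt34 : wt (e x + e y) = 3 ∨ wt (e x + e y) = 4 := by
      have hSe := hS (e x + e y)
      rw [hmk] at hSe
      have hA := h1 _ (ψ (x + y)).2
      have hB := h2 _ (ψ (x + y)).2
      have hle := wt_le (e x + e y)
      have hne0 : wt (e x + e y) ≠ 0 := by
        intro h
        exact hne (by rw [← hmk, (wt_zero_iff _).mp h]; simp)
      have hne7 : wt (e x + e y) ≠ 7 := by
        intro h
        apply hne
        rw [← hmk, (wt_seven_iff _).mp h]
        exact (Submodule.Quotient.mk_eq_zero _).mpr (mem_allOnes.mpr (Or.inr rfl))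
      omega
    -- weight of sum via symmetric difference
    have hsd : wt (e x + e y) + 2 * (supp (e x) ∩ supp (e y)).card
        = wt (e x) + wt (e y) := by
      rw [wt_eq_card, supp_add]
      have : symmDiff (supp (e x)) (supp (e y))
          = (supp (e x) ∪ supp (e y)) \ (supp (e x) ∩ supp (e y)) := by
        ext i; simp [Finset.mem_symmDiff]; tauto
      rw [this, Finset.card_sdiff_of_subset (Finset.inter_subset_union), wt_eq_card, wt_eq_card]
      have h1' := Finset.card_union_add_card_inter (supp (e x)) (supp (e y))
      have h2' : (supp (e x) ∩ supp (e y)).card ≤ (supp (e x) ∪ supp (e y)).card :=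
        Finset.card_le_card Finset.inter_subset_union
      omega
    rw [hwt x hx, hwt y hy] at hsd
    omega
  -- distinctness of the representatives
  have hedist : ∀ x y : F2 4, x ≠ 0 → y ≠ 0 → x ≠ y → e x ≠ e y := by
    intro x y hx hy hxy h
    have := hpair x y hx hy hxy
    rw [h, Finset.inter_self, ← wt_eq_card, hwt y hy] at this
    omega
  -- double counting
  set A : Finset (F2 4) := Finset.univ.filter (fun x => x ≠ 0) with hA
  have hAcard : A.card = 15 := by
    rw [hA]
    have h0 : (Finset.univ.filter (fun x : F2 4 => x ≠ 0)) = Finset.univ.erase 0 := by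
      ext x
      simp [Finset.mem_erase, and_comm]
    rw [h0, Finset.card_erase_of_mem (Finset.mem_univ _), Finset.card_univ]
    simp [Fintype.card_fun]
  have hcount : ∑ x ∈ A, wt (e x) = 45 := by
    have : ∀ x ∈ A, wt (e x) = 3 := by
      intro x hx
      exact hwt x (by simpa [hA] using hx)
    rw [Finset.sum_congr rfl this, Finset.sum_const, hAcard]; rfl
  have hswap : ∑ x ∈ A, wt (e x)
      = ∑ i : Fin 7, (A.filter (fun x => (e x) i = 1)).card := by
    have : ∀ x ∈ A, wt (e x) = ∑ i : Fin 7, if (e x) i = 1 then 1 else 0 := by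
      intro x _
      rw [wt, Finset.card_filter]
    rw [Finset.sum_congr rfl this, Finset.sum_comm]
    refine Finset.sum_congr rfl fun i _ => ?_
    rw [Finset.card_filter]
  have hcol : ∀ i : Fin 7, (A.filter (fun x => (e x) i = 1)).card ≤ 3 := by
    intro i
    set C : Finset (F2 4) := A.filter (fun x => (e x) i = 1) with hC
    by_contra hgt
    push_neg at hgt
    -- the sets supp (e x) \ {i}, for x ∈ C, are pairwise disjoint 2-subsets of univ.erase i
    have hmemC : ∀ x ∈ C, x ≠ 0 ∧ i ∈ supp (e x) := by
      intro x hx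
      rw [hC, Finset.mem_filter, hA, Finset.mem_filter] at hx
      exact ⟨hx.1.2, mem_supp.mpr hx.2⟩
    have hinter : ∀ x ∈ C, ∀ y ∈ C, x ≠ y →
        supp (e x) ∩ supp (e y) = {i} := by
      intro x hx y hy hxy
      have h1c := hpair x y (hmemC x hx).1 (hmemC y hy).1 hxy
      obtain ⟨a, ha⟩ := Finset.card_eq_one.mp h1c
      have hi : i ∈ supp (e x) ∩ supp (e y) :=
        Finset.mem_inter.mpr ⟨(hmemC x hx).2, (hmemC y hy).2⟩
      rw [ha] at hi ⊢
      rw [Finset.mem_singleton] at hi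
      rw [hi]
    have hdisj : ∀ x ∈ C, ∀ y ∈ C, x ≠ y →
        Disjoint (supp (e x) \ {i}) (supp (e y) \ {i}) := by
      intro x hx y hy hxy
      rw [Finset.disjoint_left]
      intro a hax hay
      rw [Finset.mem_sdiff, Finset.mem_singleton] at hax hay
      have : a ∈ supp (e x) ∩ supp (e y) := Finset.mem_inter.mpr ⟨hax.1, hay.1⟩
      rw [hinter x hx y hy hxy, Finset.mem_singleton] at this
      exact hax.2 this
    have hbiu : (C.biUnion (fun x => supp (e x) \ {i})).card
        = ∑ x ∈ C, (supp (e x) \ {i}).card := Finset.card_biUnion hdisj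
    have hsub : C.biUnion (fun x => supp (e x) \ {i}) ⊆ Finset.univ.erase i := by
      intro a ha
      rw [Finset.mem_biUnion] at ha
      obtain ⟨x, _, hax⟩ := ha
      rw [Finset.mem_sdiff, Finset.mem_singleton] at hax
      exact Finset.mem_erase.mpr ⟨hax.2, Finset.mem_univ a⟩
    have hsize : ∀ x ∈ C, (supp (e x) \ {i}).card = 2 := by
      intro x hx
      rw [Finset.card_sdiff_of_subset (Finset.singleton_subset_iff.mpr (hmemC x hx).2),
        ← wt_eq_card, hwt x (hmemC x hx).1, Finset.card_singleton]
    have hle6 : (C.biUnion (fun x => supp (e x) \ {i})).card ≤ 6 := by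
      calc _ ≤ (Finset.univ.erase i).card := Finset.card_le_card hsub
        _ = 6 := by rw [Finset.card_erase_of_mem (Finset.mem_univ i)]; simp
    rw [hbiu, Finset.sum_congr rfl hsize, Finset.sum_const, smul_eq_mul] at hle6
    omega
  have : (45 : ℕ) ≤ 21 := by
    rw [← hcount, hswap]
    calc ∑ i : Fin 7, (A.filter (fun x => (e x) i = 1)).card
        ≤ ∑ _i : Fin 7, 3 := Finset.sum_le_sum (fun i _ => hcol i)
      _ = 21 := by simp
  omega
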